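/- arXiv:1203.5744 — 2 statements merged into one kernel-verified Lean document; each statement's English description precedes it below -/
import Mathlib

section
/- Let n ≤ m be positive integers, let B and Δ be nonempty open subsets of ℝ^m with B ⊆ Δ and B dense in Δ, and let f : Δ → ℝ^n be differentiable on Δ such that every point of B is a regular point of f (i.e., the derivative Df(t) is surjective for every t ∈ B). Then for any absolutely continuous probability measure μ on Δ (with respect to Lebesgue measure) satisfying μ(B) > 0, the pushforward measure μ ∘ f⁻¹ is not singular with respect to Lebesgue measure on ℝ^n. -/
open MeasureTheory Set
open scoped NNReal ENNReal

section Aux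

variable {E : Type*} [NormedAddCommGroup E] [NormedSpace ℝ E] [FiniteDimensional ℝ E]
  [MeasurableSpace E] [BorelSpace E] (μ : Measure E) [μ.IsAddHaarMeasure]

/-- For an invertible linear map `A`, there is a positive `δ` such that any map approximated
by `A` up to `δ` on a set sends null image back to null set. -/
lemma aux_delta (A : E →L[ℝ] E) (hA : A.det ≠ 0) :
    ∃ δ : ℝ≥0, δ ≠ 0 ∧ ∀ (s : Set E) (F : E → E),
      ApproximatesLinearOn F A s δ → μ (F '' s) = 0 → μ s = 0 := by
  have hpos : (0:ℝ) < |A.det| := abs_pos.mpr hA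
  set c : ℝ≥0 := Real.toNNReal (|A.det| / 2) with hc
  have hc0 : c ≠ 0 := by
    rw [hc, Ne, Real.toNNReal_eq_zero, not_le]
    linarith
  have hm : (c : ℝ≥0∞) < ENNReal.ofReal |A.det| := by
    have hcc : (c : ℝ≥0∞) = ENNReal.ofReal (|A.det| / 2) := rfl
    rw [hcc]
    exact (ENNReal.ofReal_lt_ofReal_iff hpos).mpr (by linarith)
  obtain ⟨δ, hδprop, hδpos⟩ :=
    ((mul_le_addHaar_image_of_lt_det μ A hm).and self_mem_nhdsWithin).exists
  refine ⟨δ, ne_of_gt hδpos, fun s F happ him => ?_⟩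
  have h1 := hδprop s F happ
  rw [him] at h1
  have h2 : (c : ℝ≥0∞) * μ s = 0 := le_antisymm h1 (zero_le)
  rcases mul_eq_zero.mp h2 with h | h
  · exact absurd h (by exact_mod_cast hc0)
  · exact h

/-- Core lemma: if a map has (within-)derivatives with nonzero determinant on a set `s`, and the
image of `s` is null, then `s` is null. -/
lemma aux_core {F : E → E} {F' : E → E →L[ℝ] E} {s : Set E}
    (hF' : ∀ x ∈ s, HasFDerivWithinAt F (F' x) s x)
    (hdet : ∀ x ∈ s, (F' x).det ≠ 0) (him : μ (F '' s) = 0) : μ s = 0 := by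
  classical
  rcases s.eq_empty_or_nonempty with rfl | hne
  · simp
  let r : (E →L[ℝ] E) → ℝ≥0 := fun A =>
    if h : A.det ≠ 0 then (aux_delta μ A h).choose else 1
  have rpos : ∀ A, r A ≠ 0 := by
    intro A
    by_cases h : A.det ≠ 0
    · simpa only [r, dif_pos h] using (aux_delta μ A h).choose_spec.1
    · simp only [r]
      rw [dif_neg h]
      exact one_ne_zero
  obtain ⟨t, A, -, -, hcov, happ, hAy⟩ :=
    exists_partition_approximatesLinearOn_of_hasFDerivWithinAt F s F' hF' r rpos
  have hnull : μ (⋃ n, s ∩ t n) = 0 := by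
    refine measure_iUnion_null fun n => ?_
    obtain ⟨y, hy, hA⟩ := hAy hne n
    have hd : (F' y).det ≠ 0 := hdet y hy
    have happn := happ n
    rw [hA] at happn
    have hr : r (F' y) = (aux_delta μ (F' y) hd).choose := dif_pos hd
    rw [hr] at happn
    exact (aux_delta μ (F' y) hd).choose_spec.2 _ _ happn
      (measure_mono_null (image_mono inter_subset_left) him)
  refine measure_mono_null (fun x hx => ?_) hnull
  rcases mem_iUnion.1 (hcov hx) with ⟨n, hn⟩
  exact mem_iUnion.2 ⟨n, hx, hn⟩

end Aux

/-- Linear algebra: for a surjective linear map `L : ℝ^m → ℝ^n` there are `m - n` coordinates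
such that vanishing on those coordinates together with `L x = 0` forces `x = 0`. -/
lemma aux_coords {n m : ℕ} (hnm : n ≤ m) (L : (Fin m → ℝ) →ₗ[ℝ] (Fin n → ℝ))
    (hL : Function.Surjective L) :
    ∃ g : Fin (m - n) → Fin m, ∀ x, L x = 0 → (∀ i, x (g i) = 0) → x = 0 := by
  classical
  set E : Fin m → (Fin m → ℝ) := fun i => Pi.single i 1 with hE
  have hspan : Submodule.span ℝ (Set.range E) = ⊤ := by
    have : Set.range E = Set.range (Pi.basisFun ℝ (Fin m)) := by
      ext x
      constructor
      · rintro ⟨i, rfl⟩; exact ⟨i, by simp [hE]⟩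
      · rintro ⟨i, rfl⟩; exact ⟨i, by simp [hE]⟩
    rw [this, Module.Basis.span_eq]
  have hK : Module.finrank ℝ (LinearMap.ker L) = m - n := by
    have h1 := LinearMap.finrank_range_add_finrank_ker L
    rw [Module.finrank_fin_fun, LinearMap.range_eq_top.mpr hL, finrank_top,
      Module.finrank_fin_fun] at h1
    omega
  have greedy : ∀ k, k ≤ n → ∃ J : Finset (Fin m), J.card = k ∧
      Disjoint (LinearMap.ker L) (Submodule.span ℝ (E '' (J : Set (Fin m)))) := by
    intro k
    induction k with
    | zero => exact fun _ => ⟨∅, by simp⟩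
    | succ k ih =>
      intro hk
      obtain ⟨J, hJcard, hJdis⟩ := ih (Nat.le_of_succ_le hk)
      set SJ := Submodule.span ℝ (E '' (J : Set (Fin m))) with hSJ
      set W := LinearMap.ker L ⊔ SJ with hW
      have h2 : Module.finrank ℝ SJ ≤ k := by
        have h21 : Module.finrank ℝ (Submodule.span ℝ ((J.image E : Finset (Fin m → ℝ)) :
            Set (Fin m → ℝ))) ≤ (J.image E).card :=
          finrank_span_finset_le_card (J.image E)
        rw [Finset.coe_image] at h21
        exact h21.trans (Finset.card_image_le.trans hJcard.le)
      have h3 := Submodule.finrank_sup_add_finrank_inf_eq (LinearMap.ker L) SJ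
      have hWrank : Module.finrank ℝ W < m := by
        rw [hW]
        omega
      obtain ⟨i, hi⟩ : ∃ i, E i ∉ W := by
        by_contra h
        push_neg at h
        have hle : Submodule.span ℝ (Set.range E) ≤ W :=
          Submodule.span_le.mpr (by rintro _ ⟨i, rfl⟩; exact h i)
        rw [hspan, top_le_iff] at hle
        rw [hle] at hWrank
        rw [finrank_top, Module.finrank_fin_fun] at hWrank
        omega
      have hiJ : i ∉ J := by
        intro hmem
        exact hi (le_sup_right (a := LinearMap.ker L)
          (Submodule.subset_span ⟨i, hmem, rfl⟩))
      refine ⟨insert i J, by rw [Finset.card_insert_of_notMem hiJ, hJcard], ?_⟩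
      rw [Submodule.disjoint_def]
      intro x hxK hxS
      rw [Finset.coe_insert, Set.image_insert_eq, Submodule.mem_span_insert] at hxS
      obtain ⟨a, z, hz, rfl⟩ := hxS
      by_cases ha : a = 0
      · subst ha
        rw [zero_smul, zero_add] at hxK ⊢
        exact (Submodule.disjoint_def.mp hJdis) z hxK hz
      · exfalso
        apply hi
        have hx : a • E i + z ∈ W := le_sup_left (a := LinearMap.ker L) (b := SJ) hxK
        have hz' : z ∈ W := le_sup_right (a := LinearMap.ker L) hz
        have hsmul : a • E i ∈ W := by
          have := W.sub_mem hx hz'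
          rwa [add_sub_cancel_right] at this
        have := W.smul_mem a⁻¹ hsmul
        rwa [smul_smul, inv_mul_cancel₀ ha, one_smul] at this
  obtain ⟨J, hJcard, hJdis⟩ := greedy n le_rfl
  have hcompl : Fintype.card (↥(Jᶜ : Finset (Fin m))) = m - n := by
    rw [Fintype.card_coe, Finset.card_compl, hJcard, Fintype.card_fin]
  set ε := Fintype.equivFinOfCardEq hcompl with hε
  refine ⟨fun i => (ε.symm i : Fin m), ?_⟩
  intro x hxK hxg
  have hzero : ∀ j, j ∉ J → x j = 0 := by
    intro j hj
    have hjc : j ∈ Jᶜ := Finset.mem_compl.mpr hj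
    have := hxg (ε ⟨j, hjc⟩)
    simpa using this
  have hxe : x = ∑ j ∈ J, x j • E j := by
    funext p
    rw [Finset.sum_apply]
    by_cases hp : p ∈ J
    · simp [hE, Pi.single_apply, hp]
    · simp [hE, Pi.single_apply, hp, hzero p hp]
  have hxspan : x ∈ Submodule.span ℝ (E '' (J : Set (Fin m))) := by
    rw [hxe]
    exact Submodule.sum_mem _ fun j hj =>
      Submodule.smul_mem _ _ (Submodule.subset_span ⟨j, hj, rfl⟩)
  exact Submodule.disjoint_def.mp hJdis x (LinearMap.mem_ker.mpr hxK) hxspan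

/-- Image of a null set under a continuous linear equivalence between finite-dimensional
spaces with Haar measures is null. -/
lemma aux_image_null {E F : Type*} [NormedAddCommGroup E] [NormedSpace ℝ E]
    [FiniteDimensional ℝ E] [MeasurableSpace E] [BorelSpace E]
    [NormedAddCommGroup F] [NormedSpace ℝ F] [FiniteDimensional ℝ F]
    [MeasurableSpace F] [BorelSpace F]
    (μ : Measure E) (ν : Measure F) [μ.IsAddHaarMeasure] [ν.IsAddHaarMeasure]
    (e : E ≃L[ℝ] F) {A : Set E} (hA : μ A = 0) : ν (e '' A) = 0 := by
  have huniq := Measure.isAddLeftInvariant_eq_smul ν (μ.map e)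
  rw [huniq]
  simp only [Measure.smul_apply, smul_eq_mul]
  have hmap : (μ.map e) (e '' A) = 0 := by
    have hψ : μ.map ⇑e = μ.map (e.toHomeomorph.toMeasurableEquiv) := rfl
    rw [hψ, MeasurableEquiv.map_apply]
    have hpre : (e.toHomeomorph.toMeasurableEquiv) ⁻¹' (e '' A) = A :=
      Set.preimage_image_eq A e.injective
    rwa [hpre]
  rw [hmap, smul_zero]

/-- If `f` is differentiable on an open set `Δ ⊆ ℝ^m` with a dense open subset `B` of regular
points (surjective derivative onto `ℝ^n`, `n ≤ m`), then the pushforward under `f` of any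
absolutely continuous probability measure `μ` supported on `Δ` with `μ(B) > 0` is not singular
with respect to Lebesgue measure on `ℝ^n`. -/
theorem stmt0 {n m : ℕ} (hn : 0 < n) (hnm : n ≤ m)
    (B Δ : Set (Fin m → ℝ)) (hBopen : IsOpen B) (hΔopen : IsOpen Δ)
    (hBne : B.Nonempty) (hΔne : Δ.Nonempty) (hBΔ : B ⊆ Δ) (hdense : Δ ⊆ closure B)
    (f : (Fin m → ℝ) → (Fin n → ℝ)) (hfm : Measurable f)
    (hf : DifferentiableOn ℝ f Δ)
    (hreg : ∀ t ∈ B, Function.Surjective (fderiv ℝ f t))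
    (μ : Measure (Fin m → ℝ)) [IsProbabilityMeasure μ]
    (hμac : μ ≪ volume) (hμΔ : μ Δᶜ = 0) (hμB : 0 < μ B) :
    ¬ (μ.map f) ⟂ₘ (volume : Measure (Fin n → ℝ)) := by
  intro hsing
  obtain ⟨S, hSm, hμS, hvS⟩ := hsing
  rw [Measure.map_apply hfm hSm] at hμS
  -- the set `T` of points of `B` mapped into the Lebesgue-null set `Sᶜ` has positive `μ`-measure
  set T : Set (Fin m → ℝ) := B ∩ f ⁻¹' Sᶜ with hT
  have hμT : μ T ≠ 0 := by
    intro h0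
    have hBsub : B ⊆ T ∪ f ⁻¹' S := by
      intro x hx
      by_cases h : f x ∈ S
      · exact Or.inr h
      · exact Or.inl ⟨hx, h⟩
    have : μ B ≤ μ T + μ (f ⁻¹' S) := (measure_mono hBsub).trans (measure_union_le _ _)
    rw [h0, hμS, add_zero] at this
    exact absurd (le_antisymm this (zero_le)) (ne_of_gt hμB)
  have hvT : volume T ≠ 0 := fun h => hμT (hμac h)
  apply hvT
  -- setup: the model product space and a linear identification with `ℝ^m`
  have hmn : n + (m - n) = m := Nat.add_sub_cancel' hnm
  let eL : ((Fin n → ℝ) × (Fin (m - n) → ℝ)) ≃L[ℝ] (Fin m → ℝ) :=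
    (((LinearEquiv.sumArrowLequivProdArrow (Fin n) (Fin (m - n)) ℝ ℝ).symm ≪≫ₗ
      LinearEquiv.funCongrLeft ℝ ℝ finSumFinEquiv.symm) ≪≫ₗ
      LinearEquiv.funCongrLeft ℝ ℝ (finCongr hmn).symm).toContinuousLinearEquiv
  haveI : (volume : Measure ((Fin n → ℝ) × (Fin (m - n) → ℝ))).IsAddHaarMeasure := by
    rw [Measure.volume_eq_prod]
    exact Measure.prod.instIsAddHaarMeasure _ _
  -- the product of the null set `Sᶜ` with the complementary factor is null
  have hprodnull : volume ((Sᶜ : Set (Fin n → ℝ)) ×ˢ (univ : Set (Fin (m - n) → ℝ))) = 0 := by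
    rw [Measure.volume_eq_prod, Measure.prod_prod, hvS, zero_mul]
  -- for each coordinate selection `g`, the associated full map and its derivatives
  classical
  let πg : (Fin (m - n) → Fin m) → ((Fin m → ℝ) →L[ℝ] (Fin (m - n) → ℝ)) := fun g =>
    ContinuousLinearMap.pi (fun i => ContinuousLinearMap.proj (g i))
  let G : (Fin (m - n) → Fin m) → (Fin m → ℝ) → (Fin m → ℝ) := fun g x =>
    eL (f x, fun i => x (g i))
  let G' : (Fin (m - n) → Fin m) → (Fin m → ℝ) → ((Fin m → ℝ) →L[ℝ] (Fin m → ℝ)) := fun g t =>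
    (eL : ((Fin n → ℝ) × (Fin (m - n) → ℝ)) →L[ℝ] (Fin m → ℝ)).comp
      ((fderiv ℝ f t).prod (πg g))
  let s : (Fin (m - n) → Fin m) → Set (Fin m → ℝ) := fun g =>
    {t | t ∈ T ∧ (G' g t).det ≠ 0}
  -- `T` is covered by the sets `s g`
  have hcover : T ⊆ ⋃ g, s g := by
    intro t ht
    obtain ⟨g, hg⟩ := aux_coords hnm (fderiv ℝ f t : (Fin m → ℝ) →ₗ[ℝ] (Fin n → ℝ))
      (hreg t ht.1)
    have hDinj : Function.Injective ((fderiv ℝ f t).prod (πg g)) := by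
      intro u v huv
      have h0 : ((fderiv ℝ f t).prod (πg g)) (u - v) = 0 := by
        rw [map_sub, huv, sub_self]
      have h1 : fderiv ℝ f t (u - v) = 0 := congrArg Prod.fst h0
      have h2 : ∀ i, (u - v) (g i) = 0 := fun i => congrFun (congrArg Prod.snd h0) i
      have := hg (u - v) h1 h2
      exact sub_eq_zero.mp this
    have hGinj : Function.Injective (G' g t) := by
      intro u v huv
      exact hDinj (eL.injective huv)
    have hdet : (G' g t).det ≠ 0 := by
      intro h0
      have hker := LinearMap.bot_lt_ker_of_det_eq_zero (f := ((G' g t) :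
        (Fin m → ℝ) →ₗ[ℝ] (Fin m → ℝ))) h0
      rw [LinearMap.ker_eq_bot.mpr hGinj] at hker
      exact lt_irrefl _ hker
    exact mem_iUnion.2 ⟨g, ht, hdet⟩
  -- each `s g` is null by the equidimensional argument
  have hsnull : ∀ g, volume (s g) = 0 := by
    intro g
    apply aux_core (volume : Measure (Fin m → ℝ)) (F := G g) (F' := G' g)
    · intro x hx
      have hdf : HasFDerivAt f (fderiv ℝ f x) x :=
        (hf.differentiableAt (hΔopen.mem_nhds (hBΔ hx.1.1))).hasFDerivAt
      have hπ : HasFDerivAt (fun y : Fin m → ℝ => (fun i => y (g i))) (πg g) x :=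
        (πg g).hasFDerivAt
      have hpair : HasFDerivAt (fun y : Fin m → ℝ => (f y, fun i => y (g i)))
          ((fderiv ℝ f x).prod (πg g)) x := hdf.prodMk hπ
      have := ((eL : ((Fin n → ℝ) × (Fin (m - n) → ℝ)) →L[ℝ]
        (Fin m → ℝ)).hasFDerivAt).comp x hpair
      exact this.hasFDerivWithinAt
    · exact fun x hx => hx.2
    · refine measure_mono_null ?_
        (aux_image_null volume volume eL hprodnull)
      rintro - ⟨t, ht, rfl⟩
      exact ⟨(f t, fun i => t (g i)), ⟨ht.1.2, trivial⟩, rfl⟩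
  exact measure_mono_null hcover (measure_iUnion_null hsnull)
end

section
/- Let B ⊆ ℝ^m be open and let f : B → ℝ^m be a Borel function differentiable almost everywhere on B such that the set {t ∈ B : det Df(t) = 0} has Lebesgue measure zero. If μ is a measure on B absolutely continuous with respect to Lebesgue measure, then the pushforward μ ∘ f⁻¹ is absolutely continuous with respect to Lebesgue measure on ℝ^m. -/
open MeasureTheory Set
open scoped NNReal ENNReal

section
variable {m : ℕ}
local notation "Em" => (Fin m → ℝ)

/-- Preimages of null sets under `f` are null within a set where `f` is differentiable
with invertible derivative. -/
lemma key_null {f : Em → Em} {f' : Em → (Em →L[ℝ] Em)} {s : Set Em}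
    (hf' : ∀ x ∈ s, HasFDerivWithinAt f (f' x) s x)
    (hsdet : ∀ x ∈ s, (f' x).det ≠ 0)
    {Z : Set Em} (hZ : volume Z = 0) :
    volume (s ∩ f ⁻¹' Z) = 0 := by
  rcases eq_empty_or_nonempty s with rfl | hne
  · simp
  classical
  set r : (Em →L[ℝ] Em) → ℝ≥0 := fun A =>
    if h : A.det ≠ 0 then
      (if ‖((A.toContinuousLinearEquivOfDetNeZero h).symm : Em →L[ℝ] Em)‖₊ = 0 then 1
        else ‖((A.toContinuousLinearEquivOfDetNeZero h).symm : Em →L[ℝ] Em)‖₊⁻¹ / 2)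
    else 1 with hr
  have rpos : ∀ A, r A ≠ 0 := by
    intro A
    simp only [hr]
    split_ifs with h1 h2
    · exact one_ne_zero
    · positivity
    · exact one_ne_zero
  obtain ⟨t, A, t_disj, t_meas, t_cover, ht, hA⟩ :=
    exists_partition_approximatesLinearOn_of_hasFDerivWithinAt f s f' hf' r rpos
  have hsub : s ∩ f ⁻¹' Z ⊆ ⋃ n, (s ∩ t n) ∩ f ⁻¹' Z := by
    intro x hx
    obtain ⟨n, hn⟩ := mem_iUnion.1 (t_cover hx.1)
    exact mem_iUnion.2 ⟨n, ⟨⟨hx.1, hn⟩, hx.2⟩⟩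
  refine le_antisymm (le_trans (measure_mono hsub) ?_) (zero_le')
  refine le_trans (measure_iUnion_le _) ?_
  have hzero : ∀ n, volume ((s ∩ t n) ∩ f ⁻¹' Z) = 0 := by
    intro n
    obtain ⟨y, ys, hAy⟩ := hA hne n
    have hAdet : (A n).det ≠ 0 := by rw [hAy]; exact hsdet y ys
    set Bq := (A n).toContinuousLinearEquivOfDetNeZero hAdet with hBq
    have hBA : (Bq : Em →L[ℝ] Em) = A n :=
      ContinuousLinearMap.coe_toContinuousLinearEquivOfDetNeZero _ _
    set N := ‖(Bq.symm : Em →L[ℝ] Em)‖₊ with hN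
    have approx : ApproximatesLinearOn f (Bq : Em →L[ℝ] Em) (s ∩ t n) (r (A n)) := by
      rw [hBA]; exact ht n
    have hc : Subsingleton Em ∨ r (A n) < N⁻¹ := by
      by_cases h0 : N = 0
      · left
        have hB0 : (Bq.symm : Em →L[ℝ] Em) = 0 := by
          rwa [hN, nnnorm_eq_zero] at h0
        constructor
        intro a b
        have ha : a = Bq ((Bq.symm : Em →L[ℝ] Em) a) := (Bq.apply_symm_apply a).symm
        have hb : b = Bq ((Bq.symm : Em →L[ℝ] Em) b) := (Bq.apply_symm_apply b).symm
        rw [ha, hb, hB0]; rfl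
      · right
        have : r (A n) = N⁻¹ / 2 := by
          simp only [hr]
          rw [dif_pos hAdet, if_neg h0]
        rw [this]
        exact NNReal.half_lt_self (by simpa using h0)
    set P := approx.toPartialEquiv hc with hP
    set g := P.symm with hg
    have glip : LipschitzOnWith (N + N * (N⁻¹ - r (A n))⁻¹ * r (A n)) g (f '' (s ∩ t n)) := by
      have := (approx.to_inv hc).lipschitz
      rw [lipschitzOnWith_iff_restrict]
      exact this
    have hsub2 : (s ∩ t n) ∩ f ⁻¹' Z ⊆ g '' (f '' (s ∩ t n) ∩ Z) := by
      intro x hx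
      refine ⟨f x, ⟨mem_image_of_mem f hx.1, hx.2⟩, ?_⟩
      have : x ∈ P.source := by
        rw [hP]
        exact hx.1
      exact P.left_inv this
    have himg : volume ((g : PartialEquiv Em Em) '' (f '' (s ∩ t n) ∩ Z)) = 0 := by
      have hvol : (μH[(m : ℝ)] : Measure Em) = volume := by
        simpa using (hausdorffMeasure_pi_real (ι := Fin m))
      have hH := (glip.mono (inter_subset_left (s := f '' (s ∩ t n)) (t := Z))).hausdorffMeasure_image_le
        (d := (m : ℝ)) (Nat.cast_nonneg m)
      rw [hvol] at hH
      refine le_antisymm (hH.trans ?_) (zero_le')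
      have hX : volume (f '' (s ∩ t n) ∩ Z) = 0 :=
        le_antisymm ((measure_mono inter_subset_right).trans hZ.le) (zero_le')
      simp [hX]
    exact le_antisymm ((measure_mono hsub2).trans himg.le) (zero_le')
  simp [hzero]

end

/-- If `f : B → ℝ^m` is a Borel function differentiable almost everywhere on an open set
`B ⊆ ℝ^m` with derivative `f'`, such that the set of points of `B` where the Jacobian
determinant vanishes has Lebesgue measure zero, then the pushforward under `f` of any measure
`μ` concentrated on `B` and absolutely continuous with respect to Lebesgue measure is again
absolutely continuous with respect to Lebesgue measure. -/
theorem stmt1 {m : ℕ} (B : Set (Fin m → ℝ)) (hBopen : IsOpen B)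
    (f : (Fin m → ℝ) → (Fin m → ℝ)) (hfm : Measurable f)
    (f' : (Fin m → ℝ) → ((Fin m → ℝ) →L[ℝ] (Fin m → ℝ)))
    (hdiff : ∀ᵐ t ∂(volume.restrict B), HasFDerivAt f (f' t) t)
    (hdet : volume {t ∈ B | (f' t).det = 0} = 0)
    (μ : Measure (Fin m → ℝ)) (hμac : μ ≪ volume) (hμB : μ Bᶜ = 0) :
    μ.map f ≪ (volume : Measure (Fin m → ℝ)) := by
  refine Measure.AbsolutelyContinuous.mk (fun Z hZmeas hZ => ?_)
  rw [Measure.map_apply hfm hZmeas]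
  set s : Set (Fin m → ℝ) :=
    {x | x ∈ B ∧ HasFDerivAt f (f' x) x ∧ (f' x).det ≠ 0} with hs
  -- the bad set in B has Lebesgue measure zero
  have h1 : volume {x | x ∈ B ∧ ¬ HasFDerivAt f (f' x) x} = 0 := by
    rw [ae_restrict_iff' hBopen.measurableSet] at hdiff
    rw [ae_iff] at hdiff
    convert hdiff using 2
    ext x
    simp only [mem_setOf_eq]
    tauto
  have hBs : volume (B \ s) = 0 := by
    have hsub : B \ s ⊆
        {x | x ∈ B ∧ ¬ HasFDerivAt f (f' x) x} ∪ {t | t ∈ B ∧ (f' t).det = 0} := by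
      intro x hx
      by_cases hdif : HasFDerivAt f (f' x) x
      · by_cases hd : (f' x).det = 0
        · exact Or.inr ⟨hx.1, hd⟩
        · exact absurd ⟨hx.1, hdif, hd⟩ hx.2
      · exact Or.inl ⟨hx.1, hdif⟩
    refine le_antisymm ?_ (zero_le')
    calc volume (B \ s)
        ≤ volume {x | x ∈ B ∧ ¬ HasFDerivAt f (f' x) x} + volume {t | t ∈ B ∧ (f' t).det = 0} :=
          (measure_mono hsub).trans (measure_union_le _ _)
      _ = 0 := by rw [h1, hdet, add_zero]
  -- decompose the preimage
  have hcover : f ⁻¹' Z ⊆ Bᶜ ∪ (B \ s) ∪ (s ∩ f ⁻¹' Z) := by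
    intro x hx
    by_cases hB : x ∈ B
    · by_cases hxs : x ∈ s
      · exact Or.inr ⟨hxs, hx⟩
      · exact Or.inl (Or.inr ⟨hB, hxs⟩)
    · exact Or.inl (Or.inl hB)
  have hkey : volume (s ∩ f ⁻¹' Z) = 0 := by
    refine key_null (fun x hx => (hx.2.1).hasFDerivWithinAt) (fun x hx => hx.2.2) hZ
  refine le_antisymm (le_trans (measure_mono hcover) ?_) (zero_le')
  refine le_trans (measure_union_le _ _) ?_
  rw [hμac hkey, add_zero]
  refine le_trans (measure_union_le _ _) ?_
  rw [hμB, hμac hBs, add_zero]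
end
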